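/- Monotonicity of the BatchBALD set function: for ω a discrete random variable and A ⊆ B finite sets of discrete random variables that are mutually conditionally independent given ω, I(A ; ω) ≤ I(B ; ω). -/

import Mathlib

open scoped BigOperators Classical

/-- Probability that the discrete random variable `X` takes value `a`,
under weight function `p` on a finite sample space. -/
noncomputable def pr {Ω α : Type*} [Fintype Ω] (p : Ω → ℝ) (X : Ω → α) (a : α) : ℝ :=
  ∑ s : Ω, if X s = a then p s else 0

/-- Shannon entropy of a discrete random variable. -/
noncomputable def ent {Ω α : Type*} [Fintype Ω] [Fintype α] (p : Ω → ℝ) (X : Ω → α) : ℝ :=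
  ∑ a : α, Real.negMulLog (pr p X a)

/-- Conditional Shannon entropy `H(X | Y) = ∑_b P(Y=b) H(X | Y=b)`. -/
noncomputable def condEnt {Ω α β : Type*} [Fintype Ω] [Fintype α] [Fintype β]
    (p : Ω → ℝ) (X : Ω → α) (Y : Ω → β) : ℝ :=
  ∑ b : β, ∑ a : α,
    pr p Y b * Real.negMulLog (pr p (fun s => (X s, Y s)) (a, b) / pr p Y b)

/-- Mutual information `I(X ; Y) = H(X) − H(X | Y)`. -/
noncomputable def mi {Ω α β : Type*} [Fintype Ω] [Fintype α] [Fintype β]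
    (p : Ω → ℝ) (X : Ω → α) (Y : Ω → β) : ℝ :=
  ent p X - condEnt p X Y

/-- Conditional mutual information `I(X ; Y | Z) = H(X | Z) − H(X | Z, Y)`. -/
noncomputable def cmi {Ω α β γ : Type*} [Fintype Ω] [Fintype α] [Fintype β] [Fintype γ]
    (p : Ω → ℝ) (X : Ω → α) (Y : Ω → β) (Z : Ω → γ) : ℝ :=
  condEnt p X Z - condEnt p X (fun s => (Z s, Y s))

/-- The joint random variable of a family of random variables. -/
def jointFam {Ω ι α : Type*} (y : ι → Ω → α) : Ω → (ι → α) := fun s i => y i s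

/-- The joint random variable of the sub-family indexed by a finite set `A`. -/
def jointSet {Ω ι α : Type*} (y : ι → Ω → α) (A : Finset ι) : Ω → (A → α) :=
  fun s i => y i.1 s

/-- The family `y` is mutually conditionally independent given `w`:
the conditional joint distribution factorizes. -/
def CondIndepFam {Ω ι α γ : Type*} [Fintype Ω] [Fintype ι] (p : Ω → ℝ)
    (y : ι → Ω → α) (w : Ω → γ) : Prop :=
  ∀ c : γ, 0 < pr p w c → ∀ a : ι → α,
    pr p (fun s => (jointFam y s, w s)) (a, c) / pr p w c
      = ∏ i : ι, pr p (fun s => (y i s, w s)) (a i, c) / pr p w c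

set_option linter.unusedSectionVars false
section aux
variable {Ω α γ : Type*} [Fintype Ω] [Fintype α] [Fintype γ] (p : Ω → ℝ)

lemma pr_nonneg {β : Type*} (hp : ∀ s, 0 ≤ p s) (X : Ω → β) (a : β) : 0 ≤ pr p X a := by
  apply Finset.sum_nonneg
  intro s _
  split <;> simp [hp s]

lemma pr_comp {β : Type*} (f : α → β) (X : Ω → α) (b : β) :
    pr p (fun s => f (X s)) b = ∑ a ∈ Finset.univ.filter (fun a => f a = b), pr p X a := by
  unfold pr
  rw [Finset.sum_comm]
  refine Finset.sum_congr rfl fun s _ => ?_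
  rw [Finset.sum_ite_eq]
  simp

lemma pr_fst (X : Ω → α) (w : Ω → γ) (a : α) :
    pr p X a = ∑ c : γ, pr p (fun s => (X s, w s)) (a, c) := by
  unfold pr
  rw [Finset.sum_comm]
  refine Finset.sum_congr rfl fun s _ => ?_
  simp [Prod.ext_iff, ite_and, Finset.sum_ite_eq]

lemma pr_snd (X : Ω → α) (w : Ω → γ) (c : γ) :
    pr p w c = ∑ a : α, pr p (fun s => (X s, w s)) (a, c) := by
  unfold pr
  rw [Finset.sum_comm]
  refine Finset.sum_congr rfl fun s _ => ?_
  simp [Prod.ext_iff, ite_and]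

end aux

lemma logSum {ι : Type*} (s : Finset ι) (a b : ι → ℝ)
    (ha : ∀ i ∈ s, 0 ≤ a i) (hb : ∀ i ∈ s, 0 ≤ b i) (hab : ∀ i ∈ s, b i = 0 → a i = 0) :
    (∑ i ∈ s, a i) * (Real.log (∑ i ∈ s, a i) - Real.log (∑ i ∈ s, b i))
      ≤ ∑ i ∈ s, a i * (Real.log (a i) - Real.log (b i)) := by
  classical
  set t := s.filter (fun i => b i ≠ 0) with ht
  have hmem : ∀ i ∈ t, i ∈ s := fun i hi => (Finset.mem_filter.1 hi).1
  have hbpos : ∀ i ∈ t, 0 < b i := by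
    intro i hi
    exact lt_of_le_of_ne (hb i (hmem i hi)) (Ne.symm (Finset.mem_filter.1 hi).2)
  have hza : ∀ i ∈ s, i ∉ t → a i = 0 := by
    intro i hi hit
    apply hab i hi
    by_contra h
    exact hit (Finset.mem_filter.2 ⟨hi, h⟩)
  have hzb : ∀ i ∈ s, i ∉ t → b i = 0 := by
    intro i hi hit
    by_contra h
    exact hit (Finset.mem_filter.2 ⟨hi, h⟩)
  have hsa : ∑ i ∈ s, a i = ∑ i ∈ t, a i :=
    (Finset.sum_subset (Finset.filter_subset _ _) hza).symm
  have hsb : ∑ i ∈ s, b i = ∑ i ∈ t, b i :=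
    (Finset.sum_subset (Finset.filter_subset _ _) hzb).symm
  have hsr : ∑ i ∈ s, a i * (Real.log (a i) - Real.log (b i))
      = ∑ i ∈ t, a i * (Real.log (a i) - Real.log (b i)) := by
    refine (Finset.sum_subset (Finset.filter_subset _ _) ?_).symm
    intro i hi hit
    rw [hza i hi hit]; ring
  rw [hsa, hsb, hsr]
  rcases Finset.eq_empty_or_nonempty t with h | hne
  · simp [h]
  set A := ∑ i ∈ t, a i with hA
  set B := ∑ i ∈ t, b i with hB
  have hBpos : 0 < B := Finset.sum_pos (fun i hi => hbpos i hi) hne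
  have hApos : 0 ≤ A := Finset.sum_nonneg fun i hi => ha i (hmem i hi)
  rcases eq_or_lt_of_le hApos with h0 | hApos
  · have : ∀ i ∈ t, a i = 0 := by
      intro i hi
      have := (Finset.sum_eq_zero_iff_of_nonneg (fun i hi => ha i (hmem i hi))).1 h0.symm
      exact this i hi
    rw [← h0]
    simp only [Finset.sum_congr rfl (fun i hi => by rw [this i hi]; ring : ∀ i ∈ t, a i * (Real.log (a i) - Real.log (b i)) = 0)]
    simp
  -- Jensen
  have hw1 : ∑ i ∈ t, b i / B = 1 := by
    rw [← Finset.sum_div]; field_simp; exact hB.symm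
  have hjen := Real.convexOn_mul_log.map_sum_le (t := t) (w := fun i => b i / B)
      (p := fun i => a i / b i)
      (fun i hi => div_nonneg (hb i (hmem i hi)) hBpos.le) hw1
      (fun i hi => Set.mem_Ici.2 (div_nonneg (ha i (hmem i hi)) (hbpos i hi).le))
  simp only [smul_eq_mul] at hjen
  have hsum : ∑ i ∈ t, b i / B * (a i / b i) = A / B := by
    have e : ∀ i ∈ t, b i / B * (a i / b i) = a i / B := by
      intro i hi
      have h1 := (hbpos i hi).ne'
      field_simp
    rw [Finset.sum_congr rfl e, ← Finset.sum_div]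
  rw [hsum] at hjen
  have key : A * (Real.log A - Real.log B) ≤ B * ∑ i ∈ t, (b i / B) * ((a i / b i) * Real.log (a i / b i)) := by
    have e1 : A * (Real.log A - Real.log B) = B * ((A / B) * Real.log (A / B)) := by
      rw [Real.log_div hApos.ne' hBpos.ne']
      field_simp
    rw [e1]
    exact mul_le_mul_of_nonneg_left hjen hBpos.le
  refine key.trans (le_of_eq ?_)
  rw [Finset.mul_sum]
  refine Finset.sum_congr rfl fun i hi => ?_
  have hbne := (hbpos i hi).ne'
  rcases eq_or_lt_of_le (ha i (hmem i hi)) with h0 | hpos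
  · rw [← h0]; simp
  · rw [Real.log_div hpos.ne' hbne]
    field_simp

section mi
variable {Ω α γ : Type*} [Fintype Ω] [Fintype α] [Fintype γ] (p : Ω → ℝ)

lemma pr_le_snd (hp : ∀ s, 0 ≤ p s) (X : Ω → α) (w : Ω → γ) (a : α) (c : γ) :
    pr p (fun s => (X s, w s)) (a, c) ≤ pr p w c := by
  rw [pr_snd p X w c]
  exact Finset.single_le_sum (f := fun a => pr p (fun s => (X s, w s)) (a, c)) (fun a _ => pr_nonneg p hp _ _) (Finset.mem_univ a)

lemma pr_le_fst (hp : ∀ s, 0 ≤ p s) (X : Ω → α) (w : Ω → γ) (a : α) (c : γ) :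
    pr p (fun s => (X s, w s)) (a, c) ≤ pr p X a := by
  rw [pr_fst p X w a]
  exact Finset.single_le_sum (f := fun c => pr p (fun s => (X s, w s)) (a, c)) (fun c _ => pr_nonneg p hp _ _) (Finset.mem_univ c)

lemma mi_eq (hp : ∀ s, 0 ≤ p s) (X : Ω → α) (w : Ω → γ) :
    mi p X w = ∑ c : γ, ∑ a : α,
      pr p (fun s => (X s, w s)) (a, c) *
        (Real.log (pr p (fun s => (X s, w s)) (a, c))
          - Real.log (pr p X a) - Real.log (pr p w c)) := by
  have hent : ent p X = ∑ c : γ, ∑ a : α,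
      -(pr p (fun s => (X s, w s)) (a, c) * Real.log (pr p X a)) := by
    rw [Finset.sum_comm]
    unfold ent
    refine Finset.sum_congr rfl fun a _ => ?_
    rw [Real.negMulLog, pr_fst p X w a, neg_mul, Finset.sum_neg_distrib, Finset.sum_mul]
  have hcond : condEnt p X w = ∑ c : γ, ∑ a : α,
      (-(pr p (fun s => (X s, w s)) (a, c) * Real.log (pr p (fun s => (X s, w s)) (a, c)))
        + pr p (fun s => (X s, w s)) (a, c) * Real.log (pr p w c)) := by
    unfold condEnt
    refine Finset.sum_congr rfl fun c _ => Finset.sum_congr rfl fun a _ => ?_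
    set J := pr p (fun s => (X s, w s)) (a, c) with hJ
    set q := pr p w c with hq
    have hJ0 : 0 ≤ J := pr_nonneg p hp _ _
    have hq0 : 0 ≤ q := pr_nonneg p hp _ _
    have hJq : J ≤ q := pr_le_snd p hp X w a c
    rcases eq_or_lt_of_le hq0 with h | hqpos
    · have : J = 0 := le_antisymm (h ▸ hJq) hJ0
      rw [this, ← h]
      simp
    rcases eq_or_lt_of_le hJ0 with h | hJpos
    · rw [← h]
      simp [Real.negMulLog]
    · rw [Real.negMulLog, Real.log_div hJpos.ne' hqpos.ne']
      field_simp
      ring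
  unfold mi
  rw [hent, hcond, ← Finset.sum_sub_distrib]
  refine Finset.sum_congr rfl fun c _ => ?_
  rw [← Finset.sum_sub_distrib]
  refine Finset.sum_congr rfl fun a _ => by ring


lemma pr_pair_comp {β β' : Type*} [Fintype β] (f : β → β') (X : Ω → β) (w : Ω → γ) (b' : β') (c : γ) :
    pr p (fun s => (f (X s), w s)) (b', c)
      = ∑ b ∈ Finset.univ.filter (fun b => f b = b'), pr p (fun s => (X s, w s)) (b, c) := by
  unfold pr
  rw [Finset.sum_comm]
  refine Finset.sum_congr rfl fun s _ => ?_
  simp [Prod.ext_iff, ite_and, Finset.sum_ite_eq]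

end mi

set_option maxHeartbeats 1000000 in
/-- monotonicity of the BatchBALD set function:
`A ⊆ B → I(A ; ω) ≤ I(B ; ω)` for sets of variables that are mutually
conditionally independent given `ω`. -/
theorem stmt_8 {Ω ι α γ : Type*} [Fintype Ω] [Fintype ι] [DecidableEq ι]
    [Fintype α] [Fintype γ]
    (p : Ω → ℝ) (hp : ∀ s, 0 ≤ p s) (hsum : ∑ s, p s = 1)
    (y : ι → Ω → α) (w : Ω → γ) (hind : CondIndepFam p y w)
    (A B : Finset ι) (hAB : A ⊆ B) :
    mi p (jointSet y A) w ≤ mi p (jointSet y B) w := by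
  classical
  set f : ((i : B) → α) → ((i : A) → α) := fun g i => g ⟨i.1, hAB i.2⟩ with hf
  have hcomp : jointSet y A = fun s => f (jointSet y B s) := rfl
  set JB : ((i : B) → α) → γ → ℝ := fun b c => pr p (fun s => (jointSet y B s, w s)) (b, c) with hJB
  set pB : ((i : B) → α) → ℝ := fun b => pr p (jointSet y B) b with hpB
  rw [mi_eq p hp (jointSet y A) w, mi_eq p hp (jointSet y B) w]
  refine Finset.sum_le_sum fun c _ => ?_
  rw [← Finset.sum_fiberwise Finset.univ f
    (fun b => JB b c * (Real.log (JB b c) - Real.log (pB b) - Real.log (pr p w c)))]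
  refine Finset.sum_le_sum fun a _ => ?_
  set S := Finset.univ.filter (fun b => f b = a) with hS
  have hJA : pr p (fun s => (jointSet y A s, w s)) (a, c) = ∑ b ∈ S, JB b c := by
    simp only [hcomp, hS, hJB]
    have h1 := pr_pair_comp p f (jointSet y B) w a c
    rw [Finset.filter_congr_decidable] at h1 ⊢
    exact h1
  have hpA : pr p (jointSet y A) a = ∑ b ∈ S, pB b := by
    simp only [hcomp, hS, hpB]
    have h1 := pr_comp p f (jointSet y B) a
    rw [Finset.filter_congr_decidable] at h1 ⊢
    exact h1
  rw [hJA, hpA]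
  have hls := logSum S (fun b => JB b c) pB
    (fun b _ => pr_nonneg p hp _ _) (fun b _ => pr_nonneg p hp _ _)
    (fun b _ hb0 => by
      have h1 : JB b c ≤ pB b := pr_le_fst p hp (jointSet y B) w b c
      have h2 : 0 ≤ JB b c := pr_nonneg p hp _ _
      exact le_antisymm (hb0 ▸ h1) h2)
  have hlog : (∑ b ∈ S, JB b c) * (Real.log (∑ b ∈ S, JB b c) - Real.log (∑ b ∈ S, pB b)
        - Real.log (pr p w c))
      = (∑ b ∈ S, JB b c) * (Real.log (∑ b ∈ S, JB b c) - Real.log (∑ b ∈ S, pB b))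
        - (∑ b ∈ S, JB b c) * Real.log (pr p w c) := by ring
  rw [hlog]
  calc (∑ b ∈ S, JB b c) * (Real.log (∑ b ∈ S, JB b c) - Real.log (∑ b ∈ S, pB b))
        - (∑ b ∈ S, JB b c) * Real.log (pr p w c)
      ≤ (∑ b ∈ S, JB b c * (Real.log (JB b c) - Real.log (pB b)))
        - (∑ b ∈ S, JB b c) * Real.log (pr p w c) := by linarith [hls]
    _ = ∑ b ∈ S, JB b c * (Real.log (JB b c) - Real.log (pB b) - Real.log (pr p w c)) := by
        rw [Finset.sum_mul, ← Finset.sum_sub_distrib]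
        refine Finset.sum_congr rfl fun b _ => by ring
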